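/- arXiv:2102.10916 — 6 statements merged into one kernel-verified Lean document; each statement's English description precedes it below -/
import Mathlib

section
/- Let G be a connected bipartite graph. Then every metric generator for G is also an edge metric generator for G. -/
/-- Distance from a vertex `s` to an edge `e` (as an element of `Sym2 V`):
the minimum of the distances from `s` to the two endpoints of `e`. -/
noncomputable def edgeDist {V : Type*} (G : SimpleGraph V) (e : Sym2 V) (s : V) : ℕ :=
  Sym2.lift ⟨fun x y => min (G.dist x s) (G.dist y s), fun _ _ => min_comm _ _⟩ e

/-- `S` is a metric generator for `G`: every pair of distinct vertices is
distinguished by some element of `S`. -/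
def IsMetricGen {V : Type*} (G : SimpleGraph V) (S : Set V) : Prop :=
  ∀ u v : V, u ≠ v → ∃ s ∈ S, G.dist s u ≠ G.dist s v

/-- `S` is an edge metric generator for `G`: every pair of distinct edges is
distinguished by some element of `S`. -/
def IsEdgeMetricGen {V : Type*} (G : SimpleGraph V) (S : Set V) : Prop :=
  ∀ e₁ ∈ G.edgeSet, ∀ e₂ ∈ G.edgeSet, e₁ ≠ e₂ → ∃ s ∈ S, edgeDist G e₁ s ≠ edgeDist G e₂ s

/-- Distance from a vertex `s` to a mixed element (a vertex or an edge). -/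
noncomputable def mixedDist {V : Type*} (G : SimpleGraph V) (a : V ⊕ Sym2 V) (s : V) : ℕ :=
  Sum.elim (fun w => G.dist s w) (fun e => edgeDist G e s) a

/-- A mixed element is valid if it is a vertex, or an actual edge of `G`. -/
def IsMixedElem {V : Type*} (G : SimpleGraph V) (a : V ⊕ Sym2 V) : Prop :=
  Sum.elim (fun _ => True) (fun e => e ∈ G.edgeSet) a

/-- `S` is a mixed metric generator for `G`: every pair of distinct elements of
`V(G) ∪ E(G)` is distinguished by some element of `S`. -/
def IsMixedMetricGen {V : Type*} (G : SimpleGraph V) (S : Set V) : Prop :=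
  ∀ a b : V ⊕ Sym2 V, IsMixedElem G a → IsMixedElem G b → a ≠ b →
    ∃ s ∈ S, mixedDist G a s ≠ mixedDist G b s

/-- The metric dimension: minimum cardinality of a metric generator. -/
noncomputable def metricDim {V : Type*} [Fintype V] (G : SimpleGraph V) : ℕ :=
  sInf {n | ∃ S : Finset V, S.card = n ∧ IsMetricGen G ↑S}

/-- The edge metric dimension: minimum cardinality of an edge metric generator. -/
noncomputable def edgeMetricDim {V : Type*} [Fintype V] (G : SimpleGraph V) : ℕ :=
  sInf {n | ∃ S : Finset V, S.card = n ∧ IsEdgeMetricGen G ↑S}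

/-- The mixed metric dimension: minimum cardinality of a mixed metric generator. -/
noncomputable def mixedMetricDim {V : Type*} [Fintype V] (G : SimpleGraph V) : ℕ :=
  sInf {n | ∃ S : Finset V, S.card = n ∧ IsMixedMetricGen G ↑S}

/-- The hypercube `Q_d`: vertices are binary vectors of length `d`, with two
vertices adjacent iff they differ in exactly one coordinate. -/
def cube (d : ℕ) : SimpleGraph (Fin d → Bool) where
  Adj u v := hammingDist u v = 1
  symm := ⟨fun u v h => by simp only [hammingDist_comm] at h ⊢; exact h⟩
  loopless := ⟨fun u h => by simp only [hammingDist_self] at h; exact one_ne_zero h.symm⟩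


private lemma fin2_eq {a b c : Fin 2} (h1 : a ≠ c) (h2 : b ≠ c) : a = b := by
  fin_cases a <;> fin_cases b <;> fin_cases c <;> simp_all

lemma walk_parity {V : Type*} {G : SimpleGraph V} (C : G.Coloring (Fin 2)) {s a : V}
    (p : G.Walk s a) : p.length % 2 = if C s = C a then 0 else 1 := by
  induction p with
  | nil => simp
  | @cons s b a h q ih =>
    have hsb : C s ≠ C b := C.valid h
    simp only [SimpleGraph.Walk.length_cons]
    by_cases hba : C b = C a
    · have hsa : C s ≠ C a := fun h' => hsb (h'.trans hba.symm)
      rw [if_pos hba] at ih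
      rw [if_neg hsa]
      omega
    · have hsa : C s = C a := fin2_eq hsb (fun h' => hba h'.symm)
      rw [if_neg hba] at ih
      rw [if_pos hsa]
      omega

lemma dist_parity {V : Type*} {G : SimpleGraph V} (hconn : G.Connected)
    (C : G.Coloring (Fin 2)) (s a : V) :
    G.dist s a % 2 = if C s = C a then 0 else 1 := by
  obtain ⟨p, hp⟩ := (hconn.preconnected s a).exists_walk_length_eq_dist
  rw [← hp]; exact walk_parity C p

lemma adj_dist_cases {V : Type*} {G : SimpleGraph V} (hconn : G.Connected)
    (C : G.Coloring (Fin 2)) {x y : V} (hxy : G.Adj x y) (s : V) :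
    G.dist s y = G.dist s x + 1 ∨ G.dist s x = G.dist s y + 1 := by
  have h1 : G.dist s y ≤ G.dist s x + 1 := by
    calc G.dist s y ≤ G.dist s x + G.dist x y := hconn.dist_triangle
    _ ≤ G.dist s x + 1 := by
        have := G.dist_le hxy.toWalk
        simp at this
        omega
  have h2 : G.dist s x ≤ G.dist s y + 1 := by
    calc G.dist s x ≤ G.dist s y + G.dist y x := hconn.dist_triangle
    _ ≤ G.dist s y + 1 := by
        have := G.dist_le hxy.symm.toWalk
        simp at this
        omega
  have p1 := dist_parity hconn C s x
  have p2 := dist_parity hconn C s y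
  have hC : C x ≠ C y := C.valid hxy
  have hne : G.dist s x ≠ G.dist s y := by
    intro h
    rw [h] at p1
    by_cases g1 : C s = C x <;> by_cases g2 : C s = C y
    · exact hC (g1.symm.trans g2)
    · rw [if_pos g1] at p1; rw [if_neg g2] at p2; omega
    · rw [if_neg g1] at p1; rw [if_pos g2] at p2; omega
    · exact hC (fin2_eq (fun h' => g1 h'.symm) (fun h' => g2 h'.symm))
  omega

lemma class_eq_of_dist_eq {V : Type*} {G : SimpleGraph V} (hconn : G.Connected)
    (C : G.Coloring (Fin 2)) {s a b : V} (h : G.dist s a = G.dist s b) : C a = C b := by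
  have p1 := dist_parity hconn C s a
  have p2 := dist_parity hconn C s b
  rw [h] at p1
  by_cases g1 : C s = C a <;> by_cases g2 : C s = C b
  · exact g1.symm.trans g2
  · rw [if_pos g1] at p1; rw [if_neg g2] at p2; omega
  · rw [if_neg g1] at p1; rw [if_pos g2] at p2; omega
  · exact fin2_eq (fun h' => g1 h'.symm) (fun h' => g2 h'.symm)

/-- In a connected bipartite graph, every metric generator is
also an edge metric generator. -/
theorem stmt0 {V : Type*} (G : SimpleGraph V) (hconn : G.Connected)
    (hbip : G.Colorable 2) (S : Set V) (hS : IsMetricGen G S) :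
    IsEdgeMetricGen G S := by
  obtain ⟨C⟩ := hbip
  intro e1 he1 e2 he2 hne
  induction e1 using Sym2.inductionOn with | hf x y =>
  induction e2 using Sym2.inductionOn with | hf u v =>
  rw [SimpleGraph.mem_edgeSet] at he1 he2
  by_contra hcon
  push_neg at hcon
  simp only [edgeDist, Sym2.lift_mk] at hcon
  have hadj_ne : ∀ (s a b : V), G.Adj a b → G.dist s a ≠ G.dist s b := by
    intro s a b hab
    have := adj_dist_cases hconn C hab s
    omega
  have key : ∀ s ∈ S, (G.dist s x = G.dist s u ∧ G.dist s y = G.dist s v) ∨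
      (G.dist s x = G.dist s v ∧ G.dist s y = G.dist s u) := by
    intro s hs
    have h1 := adj_dist_cases hconn C he1 s
    have h2 := adj_dist_cases hconn C he2 s
    have h3 := hcon s hs
    have cx : G.dist x s = G.dist s x := SimpleGraph.dist_comm
    have cy : G.dist y s = G.dist s y := SimpleGraph.dist_comm
    have cu : G.dist u s = G.dist s u := SimpleGraph.dist_comm
    have cv : G.dist v s = G.dist s v := SimpleGraph.dist_comm
    rw [cx, cy, cu, cv] at h3
    omega
  by_cases hxu : x = u
  · subst hxu
    have hyv : y ≠ v := fun h => hne (by rw [h])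
    obtain ⟨s, hs, hd⟩ := hS y v hyv
    rcases key s hs with ⟨_, h⟩ | ⟨h, _⟩
    · exact hd h
    · exact hadj_ne s x v he2 h
  by_cases hxv : x = v
  · subst hxv
    have hyu : y ≠ u := fun h => hne (by rw [h, Sym2.eq_swap])
    obtain ⟨s, hs, hd⟩ := hS y u hyu
    rcases key s hs with ⟨_, h⟩ | ⟨_, h⟩
    · exact hadj_ne s y x he1.symm h
    · exact hd h
  by_cases hyu : y = u
  · subst hyu
    obtain ⟨s, hs, hd⟩ := hS x v hxv
    rcases key s hs with ⟨h, _⟩ | ⟨h, _⟩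
    · exact hadj_ne s x y he1 h
    · exact hd h
  by_cases hyv : y = v
  · subst hyv
    obtain ⟨s, hs, hd⟩ := hS x u hxu
    rcases key s hs with ⟨h, _⟩ | ⟨h, _⟩
    · exact hd h
    · exact hadj_ne s x y he1 h
  · obtain ⟨s0, hs0, hd0⟩ := hS x u hxu
    obtain ⟨s1, hs1, hd1⟩ := hS x v hxv
    have h0 : G.dist s0 x = G.dist s0 v := by
      rcases key s0 hs0 with ⟨h, _⟩ | ⟨h, _⟩
      · exact absurd h hd0
      · exact h
    have h1 : G.dist s1 x = G.dist s1 u := by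
      rcases key s1 hs1 with ⟨h, _⟩ | ⟨h, _⟩
      · exact h
      · exact absurd h hd1
    have c0 : C x = C v := class_eq_of_dist_eq hconn C h0
    have c1 : C x = C u := class_eq_of_dist_eq hconn C h1
    exact C.valid he2 (c1.symm.trans c0)
end

section
/- For every connected bipartite graph G, the edge metric dimension of G is at most the metric dimension of G, i.e., edim(G) ≤ dim(G). -/
lemma fin2_aux (a b c : Fin 2) (h : a ≠ b) : (¬ b = c ↔ a = c) := by
  fin_cases a <;> fin_cases b <;> fin_cases c <;> simp_all

lemma fin2_aux2 (a b c : Fin 2) (h : (a = b ↔ a = c)) : b = c := by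
  fin_cases a <;> fin_cases b <;> fin_cases c <;> simp_all

lemma fin2_aux3 (a b c : Fin 2) (h1 : a ≠ b) (h2 : a ≠ c) : b = c := by
  fin_cases a <;> fin_cases b <;> fin_cases c <;> simp_all

lemma parity_walk {V : Type*} {G : SimpleGraph V} (C : G.Coloring (Fin 2)) {s x : V}
    (p : G.Walk s x) : (Even p.length ↔ C s = C x) := by
  induction p with
  | nil => simp
  | cons h p ih =>
    rename_i u v w
    simp only [SimpleGraph.Walk.length_cons, Nat.even_add_one, ih]
    exact fin2_aux _ _ _ (C.valid h)

lemma parity_dist {V : Type*} {G : SimpleGraph V} (hconn : G.Connected)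
    (C : G.Coloring (Fin 2)) (s x : V) : (Even (G.dist s x) ↔ C s = C x) := by
  obtain ⟨p, hp⟩ := hconn.exists_walk_length_eq_dist s x
  rw [← hp]; exact parity_walk C p

lemma adj_dist {V : Type*} {G : SimpleGraph V} (hconn : G.Connected)
    (C : G.Coloring (Fin 2)) {a b : V} (hab : G.Adj a b) (s : V) :
    G.dist s b = G.dist s a + 1 ∨ G.dist s a = G.dist s b + 1 := by
  have h1 : G.dist s b ≤ G.dist s a + 1 := by
    have := hconn.dist_triangle (u := s) (v := a) (w := b)
    rwa [(SimpleGraph.dist_eq_one_iff_adj).2 hab] at this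
  have h2 : G.dist s a ≤ G.dist s b + 1 := by
    have := hconn.dist_triangle (u := s) (v := b) (w := a)
    rwa [(SimpleGraph.dist_eq_one_iff_adj).2 hab.symm] at this
  have hne : G.dist s a ≠ G.dist s b := by
    intro h
    have pa := parity_dist hconn C s a
    have pb := parity_dist hconn C s b
    rw [h] at pa
    exact C.valid hab (fin2_aux2 _ _ _ (pa.symm.trans pb))
  omega

lemma metric_to_edge {V : Type*} {G : SimpleGraph V} (hconn : G.Connected)
    (C : G.Coloring (Fin 2)) {S : Set V} (hS : IsMetricGen G S) : IsEdgeMetricGen G S := by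
  intro e1 he1 e2 he2 hne
  induction e1 using Sym2.ind with | _ a b => ?_
  induction e2 using Sym2.ind with | _ c d => ?_
  have hab : G.Adj a b := he1
  have hcd : G.Adj c d := he2
  have hcab : C a ≠ C b := C.valid hab
  have hccd : C c ≠ C d := C.valid hcd
  obtain ⟨x, y, hx, hy, hcxy, hxy⟩ :
      ∃ x y, (x = a ∨ x = b) ∧ (y = c ∨ y = d) ∧ C x = C y ∧ x ≠ y := by
    by_cases h1 : C a = C c
    · by_cases h2 : a = c
      · refine ⟨b, d, Or.inr rfl, Or.inr rfl,
          fin2_aux3 (C a) _ _ hcab (by rw [h2]; exact hccd), fun h => hne ?_⟩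
        rw [h2, h]
      · exact ⟨a, c, Or.inl rfl, Or.inl rfl, h1, h2⟩
    · have h1' : C a = C d := fin2_aux3 (C c) _ _ (Ne.symm h1) hccd
      by_cases h2 : a = d
      · refine ⟨b, c, Or.inr rfl, Or.inl rfl,
          fin2_aux3 (C d) _ _ (by rw [← h2]; exact hcab) (Ne.symm hccd), fun h => hne ?_⟩
        rw [h2, h, Sym2.eq_swap]
      · exact ⟨a, d, Or.inl rfl, Or.inr rfl, h1', h2⟩
  obtain ⟨s, hs, hds⟩ := hS x y hxy
  refine ⟨s, hs, fun heq => ?_⟩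
  have hmin : min (G.dist s a) (G.dist s b) = min (G.dist s c) (G.dist s d) := by
    have h1 : edgeDist G s(a,b) s = min (G.dist a s) (G.dist b s) := rfl
    have h2 : edgeDist G s(c,d) s = min (G.dist c s) (G.dist d s) := rfl
    rw [h1, h2, SimpleGraph.dist_comm, SimpleGraph.dist_comm (u := b),
      SimpleGraph.dist_comm (u := c), SimpleGraph.dist_comm (u := d)] at heq
    exact heq
  have hab' := adj_dist hconn C hab s
  have hcd' := adj_dist hconn C hcd s
  have hpar : G.dist s x % 2 = G.dist s y % 2 := by
    have px := parity_dist hconn C s x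
    have py := parity_dist hconn C s y
    rw [Nat.even_iff] at px py
    rw [hcxy] at px
    omega
  rcases hx with rfl | rfl <;> rcases hy with rfl | rfl <;> omega

/-- For every connected bipartite graph, `edim(G) ≤ dim(G)`. -/
theorem stmt1 {V : Type*} [Fintype V] (G : SimpleGraph V) (hconn : G.Connected)
    (hbip : G.Colorable 2) :
    edgeMetricDim G ≤ metricDim G := by
  obtain ⟨C⟩ := hbip
  have hgen : IsMetricGen G (↑(Finset.univ : Finset V)) := by
    intro u v huv
    refine ⟨u, Finset.mem_coe.2 (Finset.mem_univ u), ?_⟩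
    rw [SimpleGraph.dist_self]
    exact (hconn.pos_dist_of_ne huv).ne
  have hmem : metricDim G ∈ {n | ∃ S : Finset V, S.card = n ∧ IsMetricGen G ↑S} :=
    Nat.sInf_mem ⟨Finset.univ.card, Finset.univ, rfl, hgen⟩
  obtain ⟨S, hcard, hSgen⟩ := hmem
  exact Nat.sInf_le ⟨S, hcard, metric_to_edge hconn C hSgen⟩
end

section
/- Let S be an edge metric generator of the hypercube Q_d and let s be an arbitrary element of S. Then S ∪ {s ⊕ α_1} is a metric generator of Q_d, where s ⊕ α_1 denotes the vertex obtained from s by flipping its first coordinate. -/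
section aux

variable {d : ℕ}

lemma cube_adj {u v : Fin d → Bool} : (cube d).Adj u v ↔ hammingDist u v = 1 := Iff.rfl

lemma hamming_eq_sum (a b : Fin d → Bool) :
    hammingDist a b = ∑ j, if a j ≠ b j then 1 else 0 := by
  rw [hammingDist, Finset.card_filter]

lemma exists_walk (d : ℕ) : ∀ n (u v : Fin d → Bool), hammingDist u v = n →
    ∃ p : (cube d).Walk u v, p.length = n := by
  intro n
  induction n with
  | zero =>
    intro u v h
    rw [hammingDist_eq_zero] at h
    subst h
    exact ⟨SimpleGraph.Walk.nil, rfl⟩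
  | succ n ih =>
    intro u v h
    have hne : ∃ i, u i ≠ v i := by
      by_contra hc
      push_neg at hc
      have : u = v := funext hc
      subst this
      simp at h
    obtain ⟨i, hi⟩ := hne
    set u' := Function.update u i (v i) with hu'
    have hadj : (cube d).Adj u u' := by
      rw [cube_adj, hamming_eq_sum]
      rw [Finset.sum_eq_single i]
      · simp [hu', hi]
      · intro j _ hj
        simp [hu', Function.update_of_ne hj]
      · simp
    have hstep : hammingDist u' v = n := by
      have h1 : hammingDist u v = hammingDist u' v + 1 := by
        rw [hamming_eq_sum, hamming_eq_sum,
          ← Finset.sum_erase_add _ _ (Finset.mem_univ i),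
          ← Finset.sum_erase_add _ _ (Finset.mem_univ i)]
        have hc : ∀ j ∈ Finset.univ.erase i,
            (if u j ≠ v j then (1:ℕ) else 0) = (if u' j ≠ v j then 1 else 0) := by
          intro j hj
          rw [hu', Function.update_of_ne (Finset.mem_erase.mp hj).1]
        rw [Finset.sum_congr rfl hc]
        simp [hu', hi]
      omega
    obtain ⟨p, hp⟩ := ih u' v hstep
    exact ⟨SimpleGraph.Walk.cons hadj p, by simp [hp]⟩

lemma hamming_le_walk {u v : Fin d → Bool} (p : (cube d).Walk u v) :
    hammingDist u v ≤ p.length := by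
  induction p with
  | nil => simp
  | @cons a b c h p ih =>
    have := hammingDist_triangle a b c
    rw [cube_adj] at h
    simp only [SimpleGraph.Walk.length_cons]
    omega

lemma cube_dist (u v : Fin d → Bool) : (cube d).dist u v = hammingDist u v := by
  obtain ⟨p, hp⟩ := exists_walk d (hammingDist u v) u v rfl
  have h1 : (cube d).dist u v ≤ hammingDist u v := hp ▸ SimpleGraph.dist_le p
  obtain ⟨q, hq⟩ := SimpleGraph.Reachable.exists_walk_length_eq_dist ⟨p⟩
  have h2 := hamming_le_walk q
  omega

lemma hamming_update (w x : Fin d → Bool) (i : Fin d) :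
    if w i = x i then hammingDist (Function.update w i (!(w i))) x = hammingDist w x + 1
    else hammingDist (Function.update w i (!(w i))) x + 1 = hammingDist w x := by
  have key : ∀ a b : Fin d → Bool, hammingDist a b =
      (∑ j ∈ Finset.univ.erase i, if a j ≠ b j then 1 else 0) +
      (if a i ≠ b i then 1 else 0) := by
    intro a b
    rw [hamming_eq_sum, ← Finset.sum_erase_add _ _ (Finset.mem_univ i)]
  have hcongr : (∑ j ∈ Finset.univ.erase i,
      if Function.update w i (!(w i)) j ≠ x j then (1:ℕ) else 0) =
      ∑ j ∈ Finset.univ.erase i, if w j ≠ x j then 1 else 0 := by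
    refine Finset.sum_congr rfl fun j hj => ?_
    rw [Function.update_of_ne (Finset.mem_erase.mp hj).1]
  by_cases h : w i = x i
  · rw [if_pos h, key (Function.update w i (!(w i))) x, key w x, hcongr,
      Function.update_self, h]
    cases x i <;> simp
  · rw [if_neg h, key (Function.update w i (!(w i))) x, key w x, hcongr,
      Function.update_self]
    have hx : (!(w i)) = x i := by cases hw : w i <;> cases hx : x i <;> simp_all
    simp [hx, h]

end aux

/-- If `S` is an edge metric generator of `Q_d` and `s ∈ S`, then
`S ∪ {s ⊕ α₁}` is a metric generator of `Q_d`, where `s ⊕ α₁` flips the first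
coordinate of `s`. -/
theorem stmt6 (d : ℕ) (hd : 1 ≤ d) (S : Set (Fin d → Bool))
    (hS : IsEdgeMetricGen (cube d) S) (s : Fin d → Bool) (hs : s ∈ S) :
    IsMetricGen (cube d)
      (S ∪ {fun i : Fin d => if (i : ℕ) = 0 then !(s i) else s i}) := by

  classical
  set i0 : Fin d := ⟨0, hd⟩ with hi0
  have hflip : ∀ w : Fin d → Bool,
      (fun i : Fin d => if (i : ℕ) = 0 then !(w i) else w i)
        = Function.update w i0 (!(w i0)) := by
    intro w
    funext j
    by_cases hj : (j : ℕ) = 0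
    · have : j = i0 := Fin.ext hj
      subst this
      simp [hj]
    · have hj' : j ≠ i0 := fun h => hj (by rw [h])
      rw [Function.update_of_ne hj']
      simp [hj]
  intro u v huv
  by_contra hcon
  push_neg at hcon
  have hSfail : ∀ x ∈ S, (cube d).dist x u = (cube d).dist x v := by
    intro x hx
    exact hcon x (Set.mem_union_left _ hx)
  have hsfail : (cube d).dist (Function.update s i0 (!(s i0))) u
      = (cube d).dist (Function.update s i0 (!(s i0))) v := by
    have := hcon _ (Set.mem_union_right _ (Set.mem_singleton _))
    rwa [hflip s] at this
  have hS' : ∀ x ∈ S, hammingDist u x = hammingDist v x := by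
    intro x hx
    have := hSfail x hx
    rwa [cube_dist, cube_dist, hammingDist_comm x u, hammingDist_comm x v] at this
  have hs' : hammingDist (Function.update s i0 (!(s i0))) u
      = hammingDist (Function.update s i0 (!(s i0))) v := by
    have := hsfail
    rwa [cube_dist, cube_dist] at this
  have hu0v0 : u i0 = v i0 := by
    have hsu := hamming_update s u i0
    have hsv := hamming_update s v i0
    have hsuv : hammingDist s u = hammingDist s v := by
      have := hS' s hs
      rwa [hammingDist_comm u s, hammingDist_comm v s] at this
    by_cases h1 : s i0 = u i0 <;> by_cases h2 : s i0 = v i0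
    · rw [← h1, ← h2]
    · rw [if_pos h1] at hsu; rw [if_neg h2] at hsv; omega
    · rw [if_neg h1] at hsu; rw [if_pos h2] at hsv; omega
    · cases hsi : s i0 <;> cases hui : u i0 <;> cases hvi : v i0 <;> simp_all
  have hadj : ∀ w : Fin d → Bool, (cube d).Adj w (Function.update w i0 (!(w i0))) := by
    intro w
    rw [cube_adj]
    have := hamming_update w w i0
    rw [if_pos rfl, hammingDist_self] at this
    rw [hammingDist_comm]
    omega
  have he1 : s(u, Function.update u i0 (!(u i0))) ∈ (cube d).edgeSet :=
    (SimpleGraph.mem_edgeSet _).mpr (hadj u)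
  have he2 : s(v, Function.update v i0 (!(v i0))) ∈ (cube d).edgeSet :=
    (SimpleGraph.mem_edgeSet _).mpr (hadj v)
  have hne : (s(u, Function.update u i0 (!(u i0))) : Sym2 (Fin d → Bool))
      ≠ s(v, Function.update v i0 (!(v i0))) := by
    intro h
    rcases Sym2.eq_iff.mp h with ⟨h1, _⟩ | ⟨h1, _⟩
    · exact huv h1
    · have : u i0 = !(v i0) := by rw [h1, Function.update_self]
      rw [hu0v0] at this
      revert this
      cases v i0 <;> simp
  obtain ⟨x, hxS, hxne⟩ := hS _ he1 _ he2 hne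
  apply hxne
  have hed : ∀ w : Fin d → Bool,
      edgeDist (cube d) s(w, Function.update w i0 (!(w i0))) x
        = min (hammingDist w x) (hammingDist (Function.update w i0 (!(w i0))) x) := by
    intro w
    simp only [edgeDist, Sym2.lift_mk, cube_dist]
  have hux := hamming_update u x i0
  have hvx := hamming_update v x i0
  have hxuv : hammingDist u x = hammingDist v x := hS' x hxS
  rw [hed u, hed v]
  by_cases h : u i0 = x i0
  · rw [if_pos h] at hux
    rw [if_pos (hu0v0 ▸ h)] at hvx
    omega
  · rw [if_neg h] at hux
    rw [if_neg (hu0v0 ▸ h)] at hvx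
    omega
end

section
/- If S is a metric generator of the hypercube Q_d, then there is at most one index i ∈ {1, …, d} such that all the vertices of S have the same value at the i-th coordinate; i.e., there cannot exist two distinct coordinates on each of which all elements of S agree. -/
open Finset in
lemma hammingDist_comp_equiv' {d : ℕ} (σ : Equiv.Perm (Fin d)) (x y : Fin d → Bool) :
    hammingDist (x ∘ σ) (y ∘ σ) = hammingDist x y := by
  simp only [hammingDist]
  apply Finset.card_bij' (fun k _ => σ k) (fun k _ => σ.symm k) <;> simp

lemma hammingDist_xor_comp {d : ℕ} (σ : Equiv.Perm (Fin d)) (c : Fin d → Bool)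
    (x y : Fin d → Bool) :
    hammingDist (fun k => xor (x (σ k)) (c k)) (fun k => xor (y (σ k)) (c k))
      = hammingDist x y := by
  have h1 := hammingDist_comp (fun k b => xor b (c k)) (x := x ∘ σ) (y := y ∘ σ)
    (fun k a b h => by revert h; cases c k <;> simp)
  simp only [Function.comp] at h1
  rw [h1, hammingDist_comp_equiv']

lemma iso_edist_le' {V W : Type*} {G : SimpleGraph V} {H : SimpleGraph W} (f : G ≃g H)
    (u v : V) : H.edist (f u) (f v) ≤ G.edist u v := by
  rw [SimpleGraph.edist_eq_sInf (u := u)]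
  apply le_sInf
  rintro b ⟨p, rfl⟩
  calc H.edist (f u) (f v) ≤ (p.map f.toHom).length := SimpleGraph.edist_le _
  _ = p.length := by rw [SimpleGraph.Walk.length_map]

lemma iso_dist_eq' {V W : Type*} {G : SimpleGraph V} {H : SimpleGraph W} (f : G ≃g H)
    (u v : V) : H.dist (f u) (f v) = G.dist u v := by
  have h1 := iso_edist_le' f u v
  have h2 := iso_edist_le' f.symm (f u) (f v)
  rw [RelIso.symm_apply_apply, RelIso.symm_apply_apply] at h2
  rw [SimpleGraph.dist, SimpleGraph.dist, le_antisymm h1 h2]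

private def psi {d : ℕ} (i j : Fin d) (e : Bool) (x : Fin d → Bool) : Fin d → Bool :=
  fun k => xor (x (Equiv.swap i j k)) (if k = i ∨ k = j then e else false)

lemma psi_invol {d : ℕ} (i j : Fin d) (e : Bool) (x : Fin d → Bool) :
    psi i j e (psi i j e x) = x := by
  funext k
  have hc : (if Equiv.swap i j k = i ∨ Equiv.swap i j k = j then e else false)
      = (if k = i ∨ k = j then e else false) := by
    rcases eq_or_ne k i with rfl | hki
    · simp [Equiv.swap_apply_left]
    rcases eq_or_ne k j with rfl | hkj
    · simp [Equiv.swap_apply_right]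
    · rw [Equiv.swap_apply_of_ne_of_ne hki hkj]
  simp only [psi, Equiv.swap_apply_self, hc]
  cases x k <;> cases (if k = i ∨ k = j then e else false) <;> rfl

lemma psi_ham {d : ℕ} (i j : Fin d) (e : Bool) (x y : Fin d → Bool) :
    hammingDist (psi i j e x) (psi i j e y) = hammingDist x y :=
  hammingDist_xor_comp (Equiv.swap i j) _ x y

def psiIso {d : ℕ} (i j : Fin d) (e : Bool) : cube d ≃g cube d where
  toEquiv := ⟨psi i j e, psi i j e, psi_invol i j e, psi_invol i j e⟩
  map_rel_iff' := by
    intro a b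
    show hammingDist (psi i j e a) (psi i j e b) = 1 ↔ hammingDist a b = 1
    rw [psi_ham]

/-- If `S` is a metric generator of `Q_d`, then there do not
exist two distinct coordinates on each of which all elements of `S` agree. -/
theorem stmt11 (d : ℕ) (S : Set (Fin d → Bool)) (hS : IsMetricGen (cube d) S) :
    ¬ ∃ i j : Fin d, i ≠ j ∧ (∃ ci : Bool, ∀ a ∈ S, a i = ci) ∧
      (∃ cj : Bool, ∀ a ∈ S, a j = cj) := by
  rintro ⟨i, j, hij, ⟨ci, hi⟩, ⟨cj, hj⟩⟩
  set e := xor ci cj with he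
  set u : Fin d → Bool := fun k => if k = i then true else if k = j then e else false with hu
  set v := psi i j e u with hv
  have huv : u ≠ v := by
    intro h
    have h1 : u i = v i := congrFun h i
    have hji : j ≠ i := hij.symm
    simp [hu, hv, psi, Equiv.swap_apply_left, hji] at h1
  obtain ⟨s, hsS, hd⟩ := hS u v huv
  apply hd
  have h1 : s i = ci := hi s hsS
  have h2 : s j = cj := hj s hsS
  have hfix : psi i j e s = s := by
    funext k
    rcases eq_or_ne k i with rfl | hki
    · show xor (s (Equiv.swap k j k)) _ = s k
      rw [Equiv.swap_apply_left]
      simp only [eq_self_iff_true, true_or, if_true, h1, h2, he]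
      cases ci <;> cases cj <;> rfl
    rcases eq_or_ne k j with rfl | hkj
    · show xor (s (Equiv.swap i k k)) _ = s k
      rw [Equiv.swap_apply_right]
      simp only [eq_self_iff_true, or_true, if_true, h1, h2, he]
      cases ci <;> cases cj <;> rfl
    · show xor (s (Equiv.swap i j k)) _ = s k
      rw [Equiv.swap_apply_of_ne_of_ne hki hkj, if_neg (by tauto)]
      cases s k <;> rfl
  have key := iso_dist_eq' (psiIso i j e) s u
  have hcoe1 : (psiIso i j e) s = psi i j e s := rfl
  have hcoe2 : (psiIso i j e) u = psi i j e u := rfl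
  rw [hcoe1, hcoe2, hfix, ← hv] at key
  exact key.symm
end

section
/- Let S be a metric generator of the hypercube Q_d, let u be a vertex of Q_d and let e = xy be an edge of Q_d with u ∉ {x, y}. Then there exists s ∈ S with d(s,u) ≠ d(e,s); that is, any metric generator of Q_d distinguishes every vertex from every edge not incident to it. -/
lemma hamm_cast_add {d : ℕ} (u v w : Fin d → Bool) :
    (hammingDist u v : ZMod 2) = (hammingDist u w : ZMod 2) + (hammingDist w v : ZMod 2) := by
  classical
  simp only [hammingDist, Finset.natCast_card_filter]
  rw [← Finset.sum_add_distrib]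
  refine Finset.sum_congr rfl fun i _ => ?_
  rcases Bool.eq_false_or_eq_true (u i) with h1 | h1 <;>
  rcases Bool.eq_false_or_eq_true (v i) with h2 | h2 <;>
  rcases Bool.eq_false_or_eq_true (w i) with h3 | h3 <;>
  simp [h1, h2, h3] <;> decide

lemma cube_reachable {d : ℕ} (u v : Fin d → Bool) : (cube d).Reachable u v := by
  classical
  suffices H : ∀ n (u v : Fin d → Bool), hammingDist u v ≤ n → (cube d).Reachable u v from
    H (hammingDist u v) u v le_rfl
  intro n
  induction n with
  | zero => intro u v h
            have : u = v := hammingDist_eq_zero.mp (Nat.le_zero.mp h)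
            exact this ▸ SimpleGraph.Reachable.refl u
  | succ n ih =>
    intro u v h
    by_cases huv : u = v
    · exact huv ▸ SimpleGraph.Reachable.refl u
    · have hne : hammingDist u v ≠ 0 := fun h0 => huv (hammingDist_eq_zero.mp h0)
      obtain ⟨i, hi⟩ : ∃ i, u i ≠ v i := by
        by_contra hc
        push_neg at hc
        exact huv (funext hc)
      set u' := Function.update u i (v i) with hu'
      have hadj : (cube d).Adj u u' := by
        show hammingDist u u' = 1
        rw [hammingDist, Finset.card_eq_one]
        refine ⟨i, ?_⟩
        ext j
        simp only [Finset.mem_filter, Finset.mem_univ, true_and, Finset.mem_singleton, hu']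
        constructor
        · intro hj
          by_contra hji
          rw [Function.update_of_ne hji] at hj
          exact hj rfl
        · intro hj; subst hj; simp [hi]
      have hle : hammingDist u' v ≤ n := by
        have hsub : (Finset.univ.filter fun j => u' j ≠ v j) ⊆
            (Finset.univ.filter fun j => u j ≠ v j) \ {i} := by
          intro j hj
          simp only [Finset.mem_filter, Finset.mem_univ, true_and, Finset.mem_sdiff,
            Finset.mem_singleton, hu'] at hj ⊢
          by_cases hji : j = i
          · subst hji; simp at hj
          · rw [Function.update_of_ne hji] at hj; exact ⟨hj, hji⟩
        have hcard := Finset.card_le_card hsub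
        have hmem : i ∈ (Finset.univ.filter fun j => u j ≠ v j) := by simp [hi]
        have : ((Finset.univ.filter fun j => u j ≠ v j) \ {i}).card
            = hammingDist u v - 1 := by
          rw [Finset.card_sdiff_of_subset (by simpa using hmem)]
          simp [hammingDist]
        have h2 : hammingDist u' v ≤ hammingDist u v - 1 := by
          rw [hammingDist]; exact hcard.trans_eq this
        omega
      have hle' : hammingDist u' v ≤ n := hle
      exact hadj.reachable.trans (ih u' v hle')

lemma cube_walk_parity {d : ℕ} {u v : Fin d → Bool} (p : (cube d).Walk u v) :
    (p.length : ZMod 2) = (hammingDist u v : ZMod 2) := by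
  induction p with
  | nil => simp
  | @cons a b c h' p' ih =>
    have hab : hammingDist a b = 1 := h'
    rw [SimpleGraph.Walk.length_cons, hamm_cast_add a c b, hab]
    push_cast
    rw [ih]
    ring

lemma cube_dist_parity {d : ℕ} (u v : Fin d → Bool) :
    ((cube d).dist u v : ZMod 2) = (hammingDist u v : ZMod 2) := by
  obtain ⟨p, hp⟩ := (cube_reachable u v).exists_walk_length_eq_dist
  rw [← hp, cube_walk_parity p]


lemma key {d : ℕ} {S : Set (Fin d → Bool)} (hS : IsMetricGen (cube d) S)
    {u x y : Fin d → Bool} (hxy : (cube d).Adj x y) (hux : u ≠ x)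
    (hpar : (hammingDist u x : ZMod 2) = 0)
    (h : ∀ s ∈ S, (cube d).dist s u = min ((cube d).dist s x) ((cube d).dist s y)) :
    False := by
  obtain ⟨s, hsS, hsne⟩ := hS u x hux
  apply hsne
  have hm := h s hsS
  have hpx : ((cube d).dist s u : ZMod 2) = ((cube d).dist s x : ZMod 2) := by
    rw [cube_dist_parity, cube_dist_parity, hamm_cast_add s x u, hpar, add_zero]
  have hxy' : (hammingDist x y : ZMod 2) = 1 := by
    have : hammingDist x y = 1 := hxy
    rw [this]; norm_num
  have hpxy : ((cube d).dist s x : ZMod 2) ≠ ((cube d).dist s y : ZMod 2) := by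
    rw [cube_dist_parity, cube_dist_parity, hamm_cast_add s x y, hammingDist_comm y x, hxy']
    intro hc
    exact one_ne_zero (add_eq_left.mp hc)
  rcases min_choice ((cube d).dist s x) ((cube d).dist s y) with hc | hc
  · rw [hm, hc]
  · exfalso
    apply hpxy
    rw [← hpx, hm, hc]

/-- A metric generator of `Q_d` distinguishes every vertex `u`
from every edge `e = xy` not incident to `u`. -/
theorem stmt15 (d : ℕ) (S : Set (Fin d → Bool)) (hS : IsMetricGen (cube d) S)
    (u x y : Fin d → Bool) (hxy : (cube d).Adj x y) (hux : u ≠ x) (huy : u ≠ y) :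
    ∃ s ∈ S, (cube d).dist s u ≠ edgeDist (cube d) s(x, y) s := by
  by_contra hcon
  push_neg at hcon
  have h : ∀ s ∈ S, (cube d).dist s u = min ((cube d).dist s x) ((cube d).dist s y) := by
    intro s hs
    have := hcon s hs
    rw [edgeDist, Sym2.lift_mk] at this
    simpa [SimpleGraph.dist_comm] using this
  have hxy1 : (hammingDist x y : ZMod 2) = 1 := by
    have : hammingDist x y = 1 := hxy
    rw [this]; norm_num
  by_cases hpar : (hammingDist u x : ZMod 2) = 0
  · exact key hS hxy hux hpar h
  · have hpar' : (hammingDist u y : ZMod 2) = 0 := by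
      have h1 : (hammingDist u x : ZMod 2) = 1 := by
        rcases (by decide : ∀ a : ZMod 2, a = 0 ∨ a = 1) ((hammingDist u x : ZMod 2)) with h0 | h1
        · exact absurd h0 hpar
        · exact h1
      rw [hamm_cast_add u y x, h1, hxy1]
      decide
    have h' : ∀ s ∈ S, (cube d).dist s u = min ((cube d).dist s y) ((cube d).dist s x) := by
      intro s hs; rw [h s hs, min_comm]
    exact key hS hxy.symm huy hpar' h'
end

section
/- For every integer d ≥ 3, the metric dimension and the mixed metric dimension of the hypercube Q_d are equal: dim(Q_d) = mdim(Q_d). -/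
open Finset

namespace Stmt17

variable {d : ℕ}

/-- Flip coordinate `i`. -/
def flp (i : Fin d) (u : Fin d → Bool) : Fin d → Bool := Function.update u i (!u i)

lemma flp_same (i : Fin d) (u : Fin d → Bool) : flp i u i = !u i := by simp [flp]

lemma flp_ne_apply {i j : Fin d} (u : Fin d → Bool) (h : j ≠ i) : flp i u j = u j := by
  simp [flp, Function.update_of_ne h]

lemma flp_flp (i : Fin d) (u : Fin d → Bool) : flp i (flp i u) = u := by
  funext j
  by_cases h : j = i
  · subst h; simp [flp]
  · rw [flp_ne_apply _ h, flp_ne_apply _ h]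

lemma flp_ne (i : Fin d) (u : Fin d → Bool) : flp i u ≠ u := by
  intro h
  have := congrFun h i
  rw [flp_same] at this
  cases hui : u i <;> rw [hui] at this <;> simp at this

lemma hamming_sum_int (x y : Fin d → Bool) :
    (hammingDist x y : ℤ) = ∑ j, (if x j ≠ y j then (1 : ℤ) else 0) := by
  rw [hammingDist, Finset.card_filter]
  push_cast
  exact Finset.sum_congr rfl (fun j _ => by split <;> simp)

lemma hamming_sum_zmod (x y : Fin d → Bool) :
    ((hammingDist x y : ℕ) : ZMod 2) = ∑ j, (if x j ≠ y j then (1 : ZMod 2) else 0) := by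
  rw [hammingDist, Finset.card_filter]
  push_cast
  exact Finset.sum_congr rfl (fun j _ => by split <;> simp)

/-- Effect of flipping one coordinate on the Hamming distance. -/
lemma hamming_flp (s u : Fin d → Bool) (i : Fin d) :
    (hammingDist s (flp i u) : ℤ) = (hammingDist s u : ℤ) + (if s i = u i then 1 else -1) := by
  rw [hamming_sum_int, hamming_sum_int]
  rw [← Finset.add_sum_erase _ _ (Finset.mem_univ i), ← Finset.add_sum_erase _ _ (Finset.mem_univ i)]
  have hrest : ∑ j ∈ Finset.univ.erase i, (if s j ≠ flp i u j then (1 : ℤ) else 0)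
      = ∑ j ∈ Finset.univ.erase i, (if s j ≠ u j then (1 : ℤ) else 0) := by
    refine Finset.sum_congr rfl (fun j hj => ?_)
    rw [flp_ne_apply _ (Finset.mem_erase.mp hj).1]
  rw [hrest, flp_same]
  have : (if s i ≠ !u i then (1 : ℤ) else 0) = (if s i ≠ u i then (1:ℤ) else 0) + (if s i = u i then 1 else -1) := by
    cases hsi : s i <;> cases hui : u i <;> norm_num
  rw [this]; ring

/-- Parity: `hammingDist u v ≡ hammingDist s u + hammingDist s v (mod 2)`. -/
lemma hamming_parity (s u v : Fin d → Bool) :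
    ((hammingDist u v : ℕ) : ZMod 2) = ((hammingDist s u : ℕ) : ZMod 2) + ((hammingDist s v : ℕ) : ZMod 2) := by
  rw [hamming_sum_zmod, hamming_sum_zmod, hamming_sum_zmod, ← Finset.sum_add_distrib]
  refine Finset.sum_congr rfl (fun j _ => ?_)
  cases hs : s j <;> cases hu : u j <;> cases hv : v j <;> decide

/-- Complementation. -/
def cmpl (u : Fin d → Bool) : Fin d → Bool := fun j => !u j

lemma hamming_cmpl (s u : Fin d → Bool) :
    hammingDist (cmpl s) u + hammingDist s u = d := by
  rw [hammingDist, hammingDist]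
  have h1 : Finset.univ.filter (fun j => cmpl s j ≠ u j) = Finset.univ.filter (fun j => ¬ (s j ≠ u j)) := by
    refine Finset.filter_congr (fun j _ => ?_)
    cases hs : s j <;> cases hu : u j <;> simp [cmpl, hs, hu]
  rw [h1, add_comm, Finset.card_filter_add_card_filter_not]
  simp

lemma bool_resolve {a b c : Bool} (h1 : a ≠ b) (h2 : c ≠ b) : a = c := by
  cases a <;> cases b <;> cases c <;> simp_all

lemma adj_flp (u : Fin d → Bool) (i : Fin d) : (cube d).Adj u (flp i u) := by
  show hammingDist u (flp i u) = 1
  rw [hammingDist]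
  have : Finset.univ.filter (fun j => u j ≠ flp i u j) = {i} := by
    ext j
    simp only [Finset.mem_filter, Finset.mem_univ, true_and, Finset.mem_singleton]
    constructor
    · intro hj
      by_contra hji
      rw [flp_ne_apply _ hji] at hj
      exact hj rfl
    · intro hj; subst hj
      rw [flp_same]
      cases u j <;> simp
  rw [this]; rfl

lemma exists_flp_of_hamming_one {u v : Fin d → Bool} (h : hammingDist u v = 1) :
    ∃ i, v = flp i u := by
  rw [hammingDist] at h
  obtain ⟨i, hi⟩ := Finset.card_eq_one.mp h
  refine ⟨i, funext fun j => ?_⟩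
  by_cases hj : j = i
  · subst hj
    have : j ∈ Finset.univ.filter (fun k => u k ≠ v k) := by rw [hi]; exact Finset.mem_singleton_self j
    have huv : u j ≠ v j := (Finset.mem_filter.mp this).2
    rw [flp_same]
    cases hu : u j <;> cases hv : v j <;> simp_all
  · have : j ∉ Finset.univ.filter (fun k => u k ≠ v k) := by
      rw [hi]; simpa using hj
    simp only [Finset.mem_filter, Finset.mem_univ, true_and] at this
    push_neg at this
    rw [flp_ne_apply _ hj, this]

lemma cube_walk_exists : ∀ (n : ℕ) (u v : Fin d → Bool), hammingDist u v = n →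
    ∃ p : (cube d).Walk u v, p.length = n := by
  intro n
  induction n with
  | zero =>
    intro u v h
    obtain rfl := eq_of_hammingDist_eq_zero h
    exact ⟨SimpleGraph.Walk.nil, rfl⟩
  | succ n ih =>
    intro u v h
    have hpos : u ≠ v := by
      intro hvu; subst hvu; rw [hammingDist_self] at h; exact absurd h (by omega)
    obtain ⟨i, hi⟩ : ∃ i, u i ≠ v i := Function.ne_iff.mp hpos
    have hstep : hammingDist (flp i u) v = n := by
      have : Finset.univ.filter (fun j => flp i u j ≠ v j)
          = (Finset.univ.filter (fun j => u j ≠ v j)).erase i := by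
        ext j
        simp only [Finset.mem_filter, Finset.mem_univ, true_and, Finset.mem_erase]
        by_cases hj : j = i
        · subst hj
          rw [flp_same]
          constructor
          · intro hc
            exact absurd (bool_resolve hc hi) (by cases u j <;> simp)
          · intro hmem; exact absurd rfl hmem.1
        · rw [flp_ne_apply _ hj]
          tauto
      rw [hammingDist, this, Finset.card_erase_of_mem (by simpa using hi)]
      rw [hammingDist] at h
      omega
    obtain ⟨p, hp⟩ := ih (flp i u) v hstep
    exact ⟨SimpleGraph.Walk.cons (adj_flp u i) p, by simpa using hp⟩

lemma hamming_le_walk_length {u v : Fin d → Bool} (p : (cube d).Walk u v) :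
    hammingDist u v ≤ p.length := by
  induction p with
  | nil => simp
  | @cons a b c hadj p ih =>
    have h1 : hammingDist a b = 1 := hadj
    have h2 := hammingDist_triangle a b c
    simp only [SimpleGraph.Walk.length_cons]
    omega

lemma cube_dist (u v : Fin d → Bool) : (cube d).dist u v = hammingDist u v := by
  obtain ⟨p, hp⟩ := cube_walk_exists (hammingDist u v) u v rfl
  refine le_antisymm (hp ▸ SimpleGraph.dist_le p) ?_
  obtain ⟨q, hq⟩ := SimpleGraph.Reachable.exists_walk_length_eq_dist ⟨p⟩
  rw [← hq]
  exact hamming_le_walk_length q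

lemma edge_rep {e : Sym2 (Fin d → Bool)} (he : e ∈ (cube d).edgeSet) :
    ∃ x i, e = s(x, flp i x) := by
  induction e with
  | _ x y =>
    rw [SimpleGraph.mem_edgeSet] at he
    obtain ⟨i, rfl⟩ := exists_flp_of_hamming_one he
    exact ⟨x, i, rfl⟩

lemma edgeDist_cube (x : Fin d → Bool) (i : Fin d) (s : Fin d → Bool) :
    edgeDist (cube d) s(x, flp i x) s
      = min (hammingDist s x) (hammingDist s (flp i x)) := by
  show min ((cube d).dist x s) ((cube d).dist (flp i x) s) = _
  rw [cube_dist, cube_dist, hammingDist_comm x s, hammingDist_comm (flp i x) s]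

/-- If `s i = x i`, the edge minimum is attained at `x`. -/
lemma min_eq_of_eq {s x : Fin d → Bool} {i : Fin d} (h : s i = x i) :
    min (hammingDist s x) (hammingDist s (flp i x)) = hammingDist s x
      ∧ hammingDist s (flp i x) = hammingDist s x + 1 := by
  have hf := hamming_flp s x i
  rw [if_pos h] at hf
  have h2 : hammingDist s (flp i x) = hammingDist s x + 1 := by exact_mod_cast hf
  exact ⟨by omega, h2⟩

/-- If `s i ≠ x i`, the edge minimum is attained at `flp i x`. -/
lemma min_eq_of_ne {s x : Fin d → Bool} {i : Fin d} (h : s i ≠ x i) :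
    min (hammingDist s x) (hammingDist s (flp i x)) = hammingDist s (flp i x)
      ∧ hammingDist s x = hammingDist s (flp i x) + 1 := by
  have hf := hamming_flp s x i
  rw [if_neg h] at hf
  have h2 : hammingDist s x = hammingDist s (flp i x) + 1 := by
    have : (hammingDist s x : ℤ) = (hammingDist s (flp i x) : ℤ) + 1 := by linarith
    exact_mod_cast this
  exact ⟨by omega, h2⟩

/-- Resolving set (metric generator), phrased with Hamming distances. -/
def Res (S : Finset (Fin d → Bool)) : Prop :=
  ∀ u v : Fin d → Bool, u ≠ v → ∃ s ∈ S, hammingDist s u ≠ hammingDist s v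

/-- No coordinate of `S` is monochromatic. -/
def NoMono (S : Finset (Fin d → Bool)) : Prop :=
  ∀ i : Fin d, ∃ s ∈ S, ∃ t ∈ S, s i ≠ t i

/-- Correlated columns contradict resolving. -/
lemma not_res_of_corr (S : Finset (Fin d → Bool)) (i j : Fin d) (hij : i ≠ j) (c : Bool)
    (hc : ∀ s ∈ S, xor (s i) (s j) = c) : ¬ Res S := by
  intro hres
  set u : Fin d → Bool := fun k => if k = j then !c else false with hu
  have hui : u i = false := by rw [hu]; simp [hij]
  have huj : u j = !c := by rw [hu]; simp
  set v := flp i (flp j u) with hv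
  have hne : u ≠ v := by
    intro h
    have := congrFun h i
    rw [hv, flp_same, flp_ne_apply _ hij] at this
    cases hb : u i <;> rw [hb] at this <;> simp at this
  obtain ⟨s, hs, hd⟩ := hres u v hne
  apply hd
  have h1 : (hammingDist s v : ℤ)
      = (hammingDist s u : ℤ) + (if s j = u j then 1 else -1) + (if s i = u i then 1 else -1) := by
    rw [hv, hamming_flp s (flp j u) i, flp_ne_apply _ hij, hamming_flp s u j]
  have hcs := hc s hs
  have hz : (if s j = u j then (1:ℤ) else -1) + (if s i = u i then 1 else -1) = 0 := by
    rw [hui, huj]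
    revert hcs
    cases c <;> cases hsi : s i <;> cases hsj : s j <;> decide
  have : (hammingDist s v : ℤ) = (hammingDist s u : ℤ) := by rw [h1]; linarith
  exact_mod_cast this.symm

/-- A resolving set of `Q_d`, `d ≥ 3`, has at least 3 elements. -/
lemma three_le_card (hd3 : 3 ≤ d) (S : Finset (Fin d → Bool)) (hres : Res S) : 3 ≤ S.card := by
  by_contra hlt
  push_neg at hlt
  have hcover : ∃ a b : Fin d → Bool, ∀ r ∈ S, r = a ∨ r = b := by
    interval_cases h : S.card
    · exact ⟨(fun _ => false), (fun _ => false), fun r hr => by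
        rw [Finset.card_eq_zero.mp h] at hr; exact absurd hr (Finset.notMem_empty r)⟩
    · obtain ⟨a, ha⟩ := Finset.card_eq_one.mp h
      exact ⟨a, a, fun r hr => by rw [ha] at hr; exact Or.inl (Finset.mem_singleton.mp hr)⟩
    · obtain ⟨a, b, _, hab⟩ := Finset.card_eq_two.mp h
      exact ⟨a, b, fun r hr => by rw [hab] at hr; simpa using hr⟩
  obtain ⟨a, b, hab⟩ := hcover
  have hcard : Fintype.card Bool < Fintype.card (Fin d) := by simp; omega
  obtain ⟨i, j, hij, hfij⟩ := Fintype.exists_ne_map_eq_of_card_lt (fun k => xor (a k) (b k)) hcard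
  refine not_res_of_corr S i j hij (xor (a i) (a j)) (fun r hr => ?_) hres
  rcases hab r hr with rfl | rfl
  · rfl
  · revert hfij
    cases a i <;> cases a j <;> cases r i <;> cases r j <;> decide

lemma bool_eq_not_of_ne {a b : Bool} (h : a ≠ b) : a = !b := by
  cases a <;> cases b <;> simp_all

lemma bool_ne_not (b : Bool) : b ≠ !b := by cases b <;> decide

/-- If the "column filters" of `S` exhaust all subsets of `S`, then `S` is not resolving. -/
lemma not_res_of_surj (hd3 : 3 ≤ d) (S : Finset (Fin d → Bool))
    (hsurj : ∀ A ⊆ S, ∃ (l : Fin d) (b : Bool), A = S.filter (fun s => s l = b)) :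
    ¬ Res S := by
  intro hres
  have hcard := three_le_card hd3 S hres
  have h1lt : 1 < S.card := by omega
  obtain ⟨s0, hs0, t0, ht0, hst⟩ := Finset.one_lt_card.mp h1lt
  obtain ⟨l1, b1, h1⟩ := hsurj {s0} (Finset.singleton_subset_iff.mpr hs0)
  obtain ⟨l2, b2, h2⟩ := hsurj {t0} (Finset.singleton_subset_iff.mpr ht0)
  obtain ⟨l3, b3, h3⟩ := hsurj {s0, t0}
    (Finset.insert_subset hs0 (Finset.singleton_subset_iff.mpr ht0))
  obtain ⟨l4, b4, h4⟩ := hsurj S (Finset.Subset.refl S)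
  have f1 : ∀ s ∈ S, (s l1 = b1 ↔ s = s0) := by
    intro s hsS
    constructor
    · intro hb
      have : s ∈ S.filter (fun s => s l1 = b1) := Finset.mem_filter.mpr ⟨hsS, hb⟩
      rw [← h1] at this; exact Finset.mem_singleton.mp this
    · rintro rfl
      have : s ∈ ({s} : Finset _) := Finset.mem_singleton_self s
      rw [h1] at this; exact (Finset.mem_filter.mp this).2
  have f2 : ∀ s ∈ S, (s l2 = b2 ↔ s = t0) := by
    intro s hsS
    constructor
    · intro hb
      have : s ∈ S.filter (fun s => s l2 = b2) := Finset.mem_filter.mpr ⟨hsS, hb⟩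
      rw [← h2] at this; exact Finset.mem_singleton.mp this
    · rintro rfl
      have : s ∈ ({s} : Finset _) := Finset.mem_singleton_self s
      rw [h2] at this; exact (Finset.mem_filter.mp this).2
  have f3 : ∀ s ∈ S, (s l3 = b3 ↔ (s = s0 ∨ s = t0)) := by
    intro s hsS
    constructor
    · intro hb
      have : s ∈ S.filter (fun s => s l3 = b3) := Finset.mem_filter.mpr ⟨hsS, hb⟩
      rw [← h3] at this
      simpa using this
    · intro hb
      have : s ∈ ({s0, t0} : Finset _) := by simpa using hb
      rw [h3] at this; exact (Finset.mem_filter.mp this).2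
  have f4 : ∀ s ∈ S, s l4 = b4 := by
    intro s hsS
    have : s ∈ S.filter (fun s => s l4 = b4) := by rw [← h4]; exact hsS
    exact (Finset.mem_filter.mp this).2
  obtain ⟨u0, hu0S, hu0s, hu0t⟩ : ∃ u ∈ S, u ≠ s0 ∧ u ≠ t0 := by
    by_contra hall
    push_neg at hall
    have hsub : S ⊆ {s0, t0} := by
      intro x hx
      by_cases hxs : x = s0
      · simp [hxs]
      · simp [hall x hx hxs]
    have := Finset.card_le_card hsub
    have h2' : ({s0, t0} : Finset _).card ≤ 2 := Finset.card_le_two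
    omega
  -- basic column values
  have e_s0_l1 : s0 l1 = b1 := (f1 s0 hs0).mpr rfl
  have e_t0_l1 : t0 l1 = !b1 := bool_eq_not_of_ne (fun h => hst ((f1 t0 ht0).mp h).symm)
  have e_u0_l1 : u0 l1 = !b1 := bool_eq_not_of_ne (fun h => hu0s ((f1 u0 hu0S).mp h))
  have e_t0_l2 : t0 l2 = b2 := (f2 t0 ht0).mpr rfl
  have e_s0_l2 : s0 l2 = !b2 := bool_eq_not_of_ne (fun h => hst ((f2 s0 hs0).mp h))
  have e_u0_l2 : u0 l2 = !b2 := bool_eq_not_of_ne (fun h => hu0t ((f2 u0 hu0S).mp h))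
  have e_s0_l3 : s0 l3 = b3 := (f3 s0 hs0).mpr (Or.inl rfl)
  have e_t0_l3 : t0 l3 = b3 := (f3 t0 ht0).mpr (Or.inr rfl)
  have e_u0_l3 : u0 l3 = !b3 := bool_eq_not_of_ne
    (fun h => by rcases (f3 u0 hu0S).mp h with h' | h' <;> [exact hu0s h'; exact hu0t h'])
  have e_s0_l4 : s0 l4 = b4 := f4 s0 hs0
  have e_t0_l4 : t0 l4 = b4 := f4 t0 ht0
  have e_u0_l4 : u0 l4 = b4 := f4 u0 hu0S
  -- column distinctness
  have n12 : l1 ≠ l2 := by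
    intro h
    have ha : (!b1) = !b2 := by rw [← e_u0_l1, ← e_u0_l2, h]
    have hb : b1 = !b2 := by rw [← e_s0_l1, ← e_s0_l2, h]
    rw [← ha] at hb; exact bool_ne_not b1 hb
  have n13 : l1 ≠ l3 := by
    intro h
    have ha : b1 = b3 := by rw [← e_s0_l1, ← e_s0_l3, h]
    have hb : (!b1) = b3 := by rw [← e_t0_l1, ← e_t0_l3, h]
    rw [← ha] at hb; exact bool_ne_not b1 hb.symm
  have n23 : l2 ≠ l3 := by
    intro h
    have ha : b2 = b3 := by rw [← e_t0_l2, ← e_t0_l3, h]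
    have hb : (!b2) = b3 := by rw [← e_s0_l2, ← e_s0_l3, h]
    rw [← ha] at hb; exact bool_ne_not b2 hb.symm
  have n14 : l1 ≠ l4 := by
    intro h
    have ha : b1 = b4 := by rw [← e_s0_l1, ← e_s0_l4, h]
    have hb : (!b1) = b4 := by rw [← e_t0_l1, ← e_t0_l4, h]
    rw [← ha] at hb; exact bool_ne_not b1 hb.symm
  have n24 : l2 ≠ l4 := by
    intro h
    have ha : b2 = b4 := by rw [← e_t0_l2, ← e_t0_l4, h]
    have hb : (!b2) = b4 := by rw [← e_s0_l2, ← e_s0_l4, h]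
    rw [← ha] at hb; exact bool_ne_not b2 hb.symm
  have n34 : l3 ≠ l4 := by
    intro h
    have ha : b3 = b4 := by rw [← e_s0_l3, ← e_s0_l4, h]
    have hb : (!b3) = b4 := by rw [← e_u0_l3, ← e_u0_l4, h]
    rw [← ha] at hb; exact bool_ne_not b3 hb.symm
  -- the unresolved pair
  set u : Fin d → Bool :=
    Function.update (Function.update (Function.update (Function.update
      (fun _ => false) l1 (!b1)) l2 (!b2)) l3 b3) l4 (!b4) with hudef
  have hul4 : u l4 = !b4 := by rw [hudef]; simp
  have hul3 : u l3 = b3 := by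
    rw [hudef, Function.update_of_ne n34, Function.update_self]
  have hul2 : u l2 = !b2 := by
    rw [hudef, Function.update_of_ne n24, Function.update_of_ne n23, Function.update_self]
  have hul1 : u l1 = !b1 := by
    rw [hudef, Function.update_of_ne n14, Function.update_of_ne n13,
      Function.update_of_ne n12, Function.update_self]
  set v := flp l1 (flp l2 (flp l3 (flp l4 u))) with hvdef
  have hw4_l3 : (flp l4 u) l3 = u l3 := flp_ne_apply _ n34
  have hw3_l2 : (flp l3 (flp l4 u)) l2 = u l2 := by
    rw [flp_ne_apply _ n23, flp_ne_apply _ n24]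
  have hw2_l1 : (flp l2 (flp l3 (flp l4 u))) l1 = u l1 := by
    rw [flp_ne_apply _ n12, flp_ne_apply _ n13, flp_ne_apply _ n14]
  have hne : u ≠ v := by
    intro h
    have := congrFun h l1
    rw [hvdef, flp_same, hw2_l1] at this
    cases hb : u l1 <;> rw [hb] at this <;> simp at this
  obtain ⟨s, hsS, hd⟩ := hres u v hne
  apply hd
  have key : (hammingDist s v : ℤ) = (hammingDist s u : ℤ)
      + ((if s l4 = u l4 then (1:ℤ) else -1) + (if s l3 = u l3 then 1 else -1)
        + (if s l2 = u l2 then 1 else -1) + (if s l1 = u l1 then 1 else -1)) := by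
    rw [hvdef, hamming_flp s _ l1, hw2_l1, hamming_flp s _ l2, hw3_l2,
      hamming_flp s _ l3, hw4_l3, hamming_flp s _ l4]
    ring
  have hsl4 : s l4 = b4 := f4 s hsS
  have T4 : (if s l4 = u l4 then (1:ℤ) else -1) = -1 := by
    rw [if_neg]; rw [hsl4, hul4]; exact bool_ne_not b4
  have hzero : ((if s l4 = u l4 then (1:ℤ) else -1) + (if s l3 = u l3 then 1 else -1)
        + (if s l2 = u l2 then 1 else -1) + (if s l1 = u l1 then 1 else -1)) = 0 := by
    rw [T4, hul3, hul2, hul1]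
    by_cases hA : s = s0
    · have c3 : s l3 = b3 := by rw [hA]; exact e_s0_l3
      have c2 : s l2 = !b2 := by rw [hA]; exact e_s0_l2
      have c1 : s l1 = b1 := by rw [hA]; exact e_s0_l1
      rw [if_pos c3, if_pos c2,
        if_neg (by intro hcon; rw [c1] at hcon; exact bool_ne_not b1 hcon)]
      norm_num
    · by_cases hB : s = t0
      · have c3 : s l3 = b3 := by rw [hB]; exact e_t0_l3
        have c2 : s l2 = b2 := by rw [hB]; exact e_t0_l2
        have c1 : s l1 = !b1 := by rw [hB]; exact e_t0_l1
        rw [if_pos c3,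
          if_neg (by intro hcon; rw [c2] at hcon; exact bool_ne_not b2 hcon),
          if_pos c1]
        norm_num
      · have hg3 : s l3 = !b3 := bool_eq_not_of_ne
          (fun h => by rcases (f3 s hsS).mp h with h' | h' <;> [exact hA h'; exact hB h'])
        have hg2 : s l2 = !b2 := bool_eq_not_of_ne (fun h => hB ((f2 s hsS).mp h))
        have hg1 : s l1 = !b1 := bool_eq_not_of_ne (fun h => hA ((f1 s hsS).mp h))
        rw [if_neg (by intro hcon; rw [hg3] at hcon; exact bool_ne_not b3 hcon.symm),
          if_pos hg2, if_pos hg1]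
        norm_num
  have : (hammingDist s v : ℤ) = (hammingDist s u : ℤ) := by rw [key, hzero]; ring
  exact_mod_cast this.symm

/-- From any resolving set one can get a resolving set with no monochromatic
coordinate, of no larger cardinality. -/
lemma repair (hd3 : 3 ≤ d) (S : Finset (Fin d → Bool)) (hres : Res S) :
    ∃ T : Finset (Fin d → Bool), Res T ∧ NoMono T ∧ T.card ≤ S.card := by
  have hA : ∃ A ∈ S.powerset, ∀ (l : Fin d) (b : Bool), A ≠ S.filter (fun s => s l = b) := by
    by_contra hno
    push_neg at hno
    refine not_res_of_surj hd3 S (fun A hAS => ?_) hres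
    obtain ⟨l, b, hlb⟩ := hno A (Finset.mem_powerset.mpr hAS)
    exact ⟨l, b, hlb⟩
  obtain ⟨A, hApow, hAne⟩ := hA
  have hAS : A ⊆ S := Finset.mem_powerset.mp hApow
  set g : (Fin d → Bool) → (Fin d → Bool) := fun s => if s ∈ A then cmpl s else s with hg
  refine ⟨S.image g, ?_, ?_, Finset.card_image_le⟩
  · -- resolving
    intro u v huv
    obtain ⟨s, hs, hd'⟩ := hres u v huv
    refine ⟨g s, Finset.mem_image_of_mem g hs, ?_⟩
    rw [hg]
    by_cases hsa : s ∈ A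
    · simp only [if_pos hsa]
      intro hcon
      apply hd'
      have h1 := hamming_cmpl s u
      have h2 := hamming_cmpl s v
      omega
    · simpa only [if_neg hsa] using hd'
  · -- no monochromatic coordinate
    intro l
    by_contra hcon
    push_neg at hcon
    have hSne : S.Nonempty := by
      have := three_le_card hd3 S hres
      exact Finset.card_pos.mp (by omega)
    obtain ⟨s₁, hs₁⟩ := hSne
    set c : Bool := g s₁ l with hc
    have hall : ∀ s ∈ S, g s l = c := by
      intro s hs
      have h₁ := hcon (g s) (Finset.mem_image_of_mem g hs) (g s₁) (Finset.mem_image_of_mem g hs₁)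
      exact h₁
    apply hAne l (!c)
    ext s
    simp only [Finset.mem_filter]
    constructor
    · intro hsA
      have hsS : s ∈ S := hAS hsA
      have := hall s hsS
      rw [hg] at this
      simp only [if_pos hsA] at this
      refine ⟨hsS, ?_⟩
      have hnc : (!(s l)) = c := this
      cases hsl : s l <;> rw [hsl] at hnc <;> rw [← hnc] <;> rfl
    · rintro ⟨hsS, hsl⟩
      by_contra hsA
      have := hall s hsS
      rw [hg] at this
      simp only [if_neg hsA] at this
      rw [this] at hsl
      exact bool_ne_not c hsl

/-- Parity identity in ℕ. -/
lemma hamming_parity_nat (s u v : Fin d → Bool) :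
    hammingDist u v % 2 = (hammingDist s u + hammingDist s v) % 2 := by
  have h := hamming_parity s u v
  rw [← Nat.cast_add] at h
  exact (ZMod.natCast_eq_natCast_iff _ _ _).mp h

/-- Vertex vs edge distinguishing. -/
lemma distinguish_vertex_edge (S : Finset (Fin d → Bool)) (hnm : NoMono S)
    (w x : Fin d → Bool) (i : Fin d) :
    ∃ s ∈ S, hammingDist s w ≠ min (hammingDist s x) (hammingDist s (flp i x)) := by
  by_contra hcon
  push_neg at hcon
  obtain ⟨s1, hs1, t1, ht1, hst⟩ := hnm i
  have hpair : ∃ se ∈ S, ∃ sn ∈ S, se i = x i ∧ sn i ≠ x i := by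
    by_cases h1 : s1 i = x i
    · exact ⟨s1, hs1, t1, ht1, h1, fun hcon' => hst (h1 ▸ hcon' ▸ rfl)⟩
    · refine ⟨t1, ht1, s1, hs1, ?_, h1⟩
      cases hxi : x i <;> cases ht1i : t1 i <;> cases hs1i : s1 i <;> simp_all
  obtain ⟨se, hse, sn, hsn, hei, hni⟩ := hpair
  have he := hcon se hse
  have hn := hcon sn hsn
  have ae := min_eq_of_eq hei
  have an := min_eq_of_ne hni
  have pe := hamming_parity_nat se w x
  have pn := hamming_parity_nat sn w x
  omega

/-- Edge vs edge, same direction (aligned representatives). -/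
lemma distinguish_edge_edge_same (S : Finset (Fin d → Bool)) (hres : Res S)
    (x z : Fin d → Bool) (i : Fin d) (hxz : x i = z i) (hne : x ≠ z) :
    ∃ s ∈ S, min (hammingDist s x) (hammingDist s (flp i x))
      ≠ min (hammingDist s z) (hammingDist s (flp i z)) := by
  by_contra hcon
  push_neg at hcon
  have hall : ∀ s ∈ S, hammingDist s x = hammingDist s z := by
    intro s hs
    have h := hcon s hs
    by_cases hsx : s i = x i
    · have a := min_eq_of_eq hsx
      have b := min_eq_of_eq (hxz ▸ hsx : s i = z i)
      omega
    · have a := min_eq_of_ne hsx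
      have b := min_eq_of_ne (fun hcon' => hsx (hxz ▸ hcon') : s i ≠ z i)
      omega
  obtain ⟨s, hs, hd'⟩ := hres x z hne
  exact hd' (hall s hs)

/-- Edge vs edge, different directions. -/
lemma distinguish_edge_edge_diff (S : Finset (Fin d → Bool)) (hres : Res S)
    (x z : Fin d → Bool) (i j : Fin d) (hij : i ≠ j) :
    ∃ s ∈ S, min (hammingDist s x) (hammingDist s (flp i x))
      ≠ min (hammingDist s z) (hammingDist s (flp j z)) := by
  by_contra hcon
  push_neg at hcon
  by_cases hp : hammingDist x z % 2 = 0
  · -- even case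
    have hdist : ∀ s ∈ S, hammingDist s x = hammingDist s z := by
      intro s hs
      have hc := hcon s hs
      have hpar := hamming_parity_nat s x z
      by_cases hA : s i = x i <;> by_cases hB : s j = z j
      · have a := min_eq_of_eq hA; have b := min_eq_of_eq hB; omega
      · have a := min_eq_of_eq hA; have b := min_eq_of_ne hB; omega
      · have a := min_eq_of_ne hA; have b := min_eq_of_eq hB; omega
      · have a := min_eq_of_ne hA; have b := min_eq_of_ne hB; omega
    by_cases hxzeq : x = z
    · subst hxzeq
      have hneq : flp j x ≠ flp i x := by
        intro h
        have := congrFun h i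
        rw [flp_ne_apply _ hij, flp_same] at this
        cases hb : x i <;> rw [hb] at this <;> simp at this
      obtain ⟨s, hs, hd'⟩ := hres (flp j x) (flp i x) hneq
      apply hd'
      have hc := hcon s hs
      by_cases hA : s i = x i <;> by_cases hB : s j = x j
      · have a := min_eq_of_eq hA; have b := min_eq_of_eq hB; omega
      · have a := min_eq_of_eq hA; have b := min_eq_of_ne hB; omega
      · have a := min_eq_of_ne hA; have b := min_eq_of_eq hB; omega
      · have a := min_eq_of_ne hA; have b := min_eq_of_ne hB; omega
    · obtain ⟨s, hs, hd'⟩ := hres x z hxzeq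
      exact hd' (hdist s hs)
  · -- odd case
    have key1 : ∀ s ∈ S, hammingDist s (flp i x) = hammingDist s z := by
      intro s hs
      have hc := hcon s hs
      have hpar := hamming_parity_nat s x z
      by_cases hA : s i = x i <;> by_cases hB : s j = z j
      · have a := min_eq_of_eq hA; have b := min_eq_of_eq hB; omega
      · have a := min_eq_of_eq hA; have b := min_eq_of_ne hB; omega
      · have a := min_eq_of_ne hA; have b := min_eq_of_eq hB; omega
      · have a := min_eq_of_ne hA; have b := min_eq_of_ne hB; omega
    have key2 : ∀ s ∈ S, hammingDist s x = hammingDist s (flp j z) := by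
      intro s hs
      have hc := hcon s hs
      have hpar := hamming_parity_nat s x z
      by_cases hA : s i = x i <;> by_cases hB : s j = z j
      · have a := min_eq_of_eq hA; have b := min_eq_of_eq hB; omega
      · have a := min_eq_of_eq hA; have b := min_eq_of_ne hB; omega
      · have a := min_eq_of_ne hA; have b := min_eq_of_eq hB; omega
      · have a := min_eq_of_ne hA; have b := min_eq_of_ne hB; omega
    have hz1 : flp i x = z := by
      by_contra hne'
      obtain ⟨s, hs, hd'⟩ := hres (flp i x) z hne'
      exact hd' (key1 s hs)
    have hz2 : x = flp j z := by
      by_contra hne'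
      obtain ⟨s, hs, hd'⟩ := hres x (flp j z) hne'
      exact hd' (key2 s hs)
    rw [← hz1] at hz2
    have := congrFun hz2 j
    rw [flp_same, flp_ne_apply _ (Ne.symm hij)] at this
    cases hb : x j <;> rw [hb] at this <;> simp at this

/-- Main lemma: a resolving set with no monochromatic coordinate is a mixed
metric generator of the hypercube. -/
lemma mixed_of_res_nomono (S : Finset (Fin d → Bool)) (hres : Res S) (hnm : NoMono S) :
    IsMixedMetricGen (cube d) ↑S := by
  intro a b ha hb hab
  match a, b with
  | Sum.inl u, Sum.inl v =>
    have huv : u ≠ v := fun h => hab (by rw [h])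
    obtain ⟨s, hs, hd'⟩ := hres u v huv
    refine ⟨s, Finset.mem_coe.mpr hs, ?_⟩
    show (cube d).dist s u ≠ (cube d).dist s v
    rwa [cube_dist, cube_dist]
  | Sum.inl w, Sum.inr e =>
    have he : e ∈ (cube d).edgeSet := hb
    obtain ⟨x, i, rfl⟩ := edge_rep he
    obtain ⟨s, hs, hd'⟩ := distinguish_vertex_edge S hnm w x i
    refine ⟨s, Finset.mem_coe.mpr hs, ?_⟩
    show (cube d).dist s w ≠ edgeDist (cube d) s(x, flp i x) s
    rwa [cube_dist, edgeDist_cube]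
  | Sum.inr e, Sum.inl w =>
    have he : e ∈ (cube d).edgeSet := ha
    obtain ⟨x, i, rfl⟩ := edge_rep he
    obtain ⟨s, hs, hd'⟩ := distinguish_vertex_edge S hnm w x i
    refine ⟨s, Finset.mem_coe.mpr hs, ?_⟩
    show edgeDist (cube d) s(x, flp i x) s ≠ (cube d).dist s w
    rw [cube_dist, edgeDist_cube]
    exact fun h => hd' h.symm
  | Sum.inr e1, Sum.inr e2 =>
    have he1 : e1 ∈ (cube d).edgeSet := ha
    have he2 : e2 ∈ (cube d).edgeSet := hb
    obtain ⟨x, i, rfl⟩ := edge_rep he1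
    obtain ⟨z, j, rfl⟩ := edge_rep he2
    have hab' : s(x, flp i x) ≠ s(z, flp j z) := fun h => hab (by rw [h])
    by_cases hij : i = j
    · subst hij
      by_cases hxz : x i = z i
      · have hne : x ≠ z := fun h => hab' (by rw [h])
        obtain ⟨s, hs, hd'⟩ := distinguish_edge_edge_same S hres x z i hxz hne
        refine ⟨s, Finset.mem_coe.mpr hs, ?_⟩
        show edgeDist (cube d) s(x, flp i x) s ≠ edgeDist (cube d) s(z, flp i z) s
        rwa [edgeDist_cube, edgeDist_cube]
      · have hxz' : x i = flp i z i := by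
          rw [flp_same]
          cases hzi : z i <;> cases hxi : x i <;> simp_all
        have hne : x ≠ flp i z := by
          intro h
          apply hab'
          rw [h, flp_flp]
          exact Sym2.eq_swap
        obtain ⟨s, hs, hd'⟩ := distinguish_edge_edge_same S hres x (flp i z) i hxz' hne
        refine ⟨s, Finset.mem_coe.mpr hs, ?_⟩
        show edgeDist (cube d) s(x, flp i x) s ≠ edgeDist (cube d) s(z, flp i z) s
        rw [edgeDist_cube, edgeDist_cube]
        rw [flp_flp] at hd'
        rwa [min_comm (hammingDist s (flp i z)) (hammingDist s z)] at hd'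
    · obtain ⟨s, hs, hd'⟩ := distinguish_edge_edge_diff S hres x z i j hij
      refine ⟨s, Finset.mem_coe.mpr hs, ?_⟩
      show edgeDist (cube d) s(x, flp i x) s ≠ edgeDist (cube d) s(z, flp j z) s
      rwa [edgeDist_cube, edgeDist_cube]

lemma isMetricGen_iff_res (S : Finset (Fin d → Bool)) :
    IsMetricGen (cube d) ↑S ↔ Res S := by
  constructor
  · intro h u v huv
    obtain ⟨s, hs, hd'⟩ := h u v huv
    exact ⟨s, Finset.mem_coe.mp hs, by rwa [cube_dist, cube_dist] at hd'⟩
  · intro h u v huv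
    obtain ⟨s, hs, hd'⟩ := h u v huv
    exact ⟨s, Finset.mem_coe.mpr hs, by rwa [cube_dist, cube_dist]⟩

lemma res_univ : Res (Finset.univ : Finset (Fin d → Bool)) := by
  intro u v huv
  refine ⟨u, Finset.mem_univ u, ?_⟩
  rw [hammingDist_self]
  exact fun h => huv (eq_of_hammingDist_eq_zero h.symm)

lemma nomono_univ : NoMono (Finset.univ : Finset (Fin d → Bool)) := by
  intro i
  exact ⟨(fun _ => false), Finset.mem_univ _, (fun _ => true), Finset.mem_univ _, by simp⟩

end Stmt17

/-- For every `d ≥ 3`, `dim(Q_d) = mdim(Q_d)`. -/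
theorem stmt17 (d : ℕ) (hd : 3 ≤ d) :
    metricDim (cube d) = mixedMetricDim (cube d) := by
  have huniv_mixed : IsMixedMetricGen (cube d) ↑(Finset.univ : Finset (Fin d → Bool)) :=
    Stmt17.mixed_of_res_nomono _ Stmt17.res_univ Stmt17.nomono_univ
  have hMm_ne : {n | ∃ S : Finset (Fin d → Bool), S.card = n ∧
      IsMixedMetricGen (cube d) ↑S}.Nonempty :=
    ⟨(Finset.univ : Finset (Fin d → Bool)).card, Finset.univ, rfl, huniv_mixed⟩
  have hMv_ne : {n | ∃ S : Finset (Fin d → Bool), S.card = n ∧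
      IsMetricGen (cube d) ↑S}.Nonempty :=
    ⟨(Finset.univ : Finset (Fin d → Bool)).card, Finset.univ, rfl,
      (Stmt17.isMetricGen_iff_res _).mpr Stmt17.res_univ⟩
  have h1 : metricDim (cube d) ≤ mixedMetricDim (cube d) := by
    unfold metricDim mixedMetricDim
    obtain ⟨S, hcard, hmix⟩ := Nat.sInf_mem hMm_ne
    refine le_trans (Nat.sInf_le ⟨S, hcard, ?_⟩) (le_of_eq rfl)
    intro u v huv
    obtain ⟨s, hs, hd'⟩ := hmix (Sum.inl u) (Sum.inl v) trivial trivial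
      (fun h => huv (Sum.inl.inj h))
    exact ⟨s, hs, hd'⟩
  have h2 : mixedMetricDim (cube d) ≤ metricDim (cube d) := by
    unfold metricDim mixedMetricDim
    obtain ⟨S, hcard, hgen⟩ := Nat.sInf_mem hMv_ne
    obtain ⟨T, hTres, hTnm, hTcard⟩ :=
      Stmt17.repair hd S ((Stmt17.isMetricGen_iff_res S).mp hgen)
    calc sInf {n | ∃ S : Finset (Fin d → Bool), S.card = n ∧ IsMixedMetricGen (cube d) ↑S}
        ≤ T.card := Nat.sInf_le ⟨T, rfl, Stmt17.mixed_of_res_nomono T hTres hTnm⟩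
      _ ≤ S.card := hTcard
      _ = _ := hcard
  exact le_antisymm h1 h2
end
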